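/- (Schoenberg) Let A be an m×n sign regular matrix with sign pattern ε (every r×r minor of A is either zero or has sign ε_r, for 1 ≤ r ≤ min{m,n}). Then S^-(Ax) ≤ S^-(x) for every x ∈ ℝ^n. -/

import Mathlib

open Matrix Filter

/-- Number of sign changes in a list of reals (consecutive pairs with negative product). -/
noncomputable def signChanges (l : List ℝ) : ℕ :=
  (l.zip l.tail).countP (fun p => decide (p.1 * p.2 < 0))

/-- `S^-(v)`: sign changes of the coordinates of `v` after discarding zero entries. -/
noncomputable def Sm {n : ℕ} (v : Fin n → ℝ) : ℕ :=
  signChanges ((List.ofFn v).filter (fun x => decide (x ≠ 0)))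

/-- `S^+(v)`: maximal number of sign changes over all ±1 completions of the zero
entries of `v`, with the convention `S^+(0) = n`. -/
noncomputable def Sp {n : ℕ} (v : Fin n → ℝ) : ℕ :=
  if v = 0 then n
  else Finset.univ.sup (fun σ : Fin n → Bool =>
    signChanges (List.ofFn (fun i => if v i = 0 then (if σ i then (1:ℝ) else -1) else v i)))

/-- First nonzero entry of a vector (`0` if the vector is zero). -/
noncomputable def firstNz {n : ℕ} (v : Fin n → ℝ) : ℝ :=
  ((List.ofFn v).filter (fun x => decide (x ≠ 0))).headI

/-- `A` is strictly sign regular with sign pattern `ε`: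
every `r × r` minor (`1 ≤ r ≤ min m n`) is nonzero with sign `ε r`. -/
def ssrPattern {m n : ℕ} (A : Matrix (Fin m) (Fin n) ℝ) (ε : ℕ → ℝ) : Prop :=
  ∀ r : ℕ, 1 ≤ r → r ≤ min m n → ∀ (f : Fin r → Fin m) (g : Fin r → Fin n),
    StrictMono f → StrictMono g → 0 < ε r * (A.submatrix f g).det

/-- `A` is sign regular with sign pattern `ε`:
every nonzero `r × r` minor (`1 ≤ r ≤ min m n`) has sign `ε r`. -/
def srPattern {m n : ℕ} (A : Matrix (Fin m) (Fin n) ℝ) (ε : ℕ → ℝ) : Prop :=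
  ∀ r : ℕ, 1 ≤ r → r ≤ min m n → ∀ (f : Fin r → Fin m) (g : Fin r → Fin n),
    StrictMono f → StrictMono g → 0 ≤ ε r * (A.submatrix f g).det

/-- The map `f` picks out consecutive indices. -/
def Contig {r m : ℕ} (f : Fin r → Fin m) : Prop :=
  ∃ a : ℕ, ∀ i : Fin r, (f i : ℕ) = a + (i : ℕ)

section SchoenbergAux

private lemma signChanges_nil : signChanges [] = 0 := rfl

private lemma signChanges_single (a : ℝ) : signChanges [a] = 0 := rfl

private lemma signChanges_cons_cons (a b : ℝ) (l : List ℝ) :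
    signChanges (a :: b :: l) = signChanges (b :: l) + (if a * b < 0 then 1 else 0) := by
  simp only [signChanges, List.tail_cons, List.zip_cons_cons, List.countP_cons]
  by_cases h : a * b < 0 <;> simp [h]

private lemma signChanges_le_append (l r : List ℝ) : signChanges l ≤ signChanges (l ++ r) := by
  induction l with
  | nil => simp [signChanges_nil]
  | cons a t ih =>
    cases t with
    | nil => simp [signChanges_single]
    | cons b t' =>
      rw [List.cons_append, List.cons_append, signChanges_cons_cons, signChanges_cons_cons]
      rw [List.cons_append] at ih
      exact Nat.add_le_add_right ih _
      

private lemma signChanges_lt_length (l : List ℝ) (hl : l ≠ []) : signChanges l < l.length := by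
  have h1 : signChanges l ≤ (l.zip l.tail).length := List.countP_le_length
  have h2 : (l.zip l.tail).length = min l.length l.tail.length := List.length_zip ..
  have h3 : l.tail.length = l.length - 1 := List.length_tail
  have : 0 < l.length := List.length_pos_iff.2 hl
  omega

private lemma Sm_zero {n : ℕ} : Sm (0 : Fin n → ℝ) = 0 := by
  rw [Sm]
  have h : (List.ofFn (0 : Fin n → ℝ)).filter (fun x => decide (x ≠ 0)) = [] := by
    rw [List.filter_eq_nil_iff]
    intro a ha
    obtain ⟨i, hi⟩ := List.mem_ofFn.1 ha
    simp [← hi]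
  rw [h, signChanges_nil]

private lemma Sm_lt_of_eq_zero {N : ℕ} (x : Fin (N + 1) → ℝ) (j : Fin (N + 1)) (hj : x j = 0)
    (hN : 1 ≤ N) : Sm x < N := by
  set F := (List.ofFn x).filter (fun x => decide (x ≠ 0)) with hF
  have hsub : F.Sublist (List.ofFn x) := List.filter_sublist
  have hne : F ≠ List.ofFn x := by
    intro h
    have h0 : (0:ℝ) ∈ F := by
      rw [h]
      exact List.mem_ofFn.2 ⟨j, hj⟩
    have := List.of_mem_filter h0
    simp at this
  have hlen : F.length < N + 1 := by
    have := List.Sublist.length_le hsub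
    rcases lt_or_eq_of_le this with h | h
    · simpa using h
    · exact absurd (List.Sublist.eq_of_length hsub h) hne
  rcases eq_or_ne F [] with h | h
  · rw [Sm, ← hF, h, signChanges_nil]; omega
  · have := signChanges_lt_length F h
    rw [Sm, ← hF]
    omega

private lemma le_signChanges_of_alt {N : ℕ} (v : Fin (N + 2) → ℝ)
    (h : ∀ j : Fin (N + 1), v j.castSucc * v j.succ < 0) : N + 1 ≤ Sm v := by
  have hv : ∀ j, v j ≠ 0 := by
    intro j
    rcases lt_or_ge (j : ℕ) (N + 1) with hj | hj
    · intro h0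
      have := h ⟨j, hj⟩
      rw [show (⟨j, hj⟩ : Fin (N+1)).castSucc = j from Fin.ext rfl, h0] at this
      simp at this
    · intro h0
      have hjN : (j : ℕ) = N + 1 := le_antisymm (Nat.lt_succ_iff.1 j.isLt) hj
      have := h ⟨N, Nat.lt_succ_self N⟩
      rw [show (⟨N, Nat.lt_succ_self N⟩ : Fin (N+1)).succ = j from Fin.ext (by simp [hjN]), h0] at this
      simp at this
  have hfil : (List.ofFn v).filter (fun x => decide (x ≠ 0)) = List.ofFn v := by
    rw [List.filter_eq_self]
    intro a ha
    obtain ⟨i, hi⟩ := List.mem_ofFn.1 ha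
    simp [← hi, hv i]
  rw [Sm, hfil, signChanges]
  have hlen : ((List.ofFn v).zip (List.ofFn v).tail).length = N + 1 := by
    simp [List.length_zip]
  rw [List.countP_eq_length.2 ?_, hlen]
  intro p hp
  obtain ⟨i, hi, hip⟩ := List.mem_iff_getElem.1 hp
  rw [hlen] at hi
  have h1 : p.1 = v ⟨i, by omega⟩ := by
    rw [← hip]
    rw [List.getElem_zip]
    simp only [List.getElem_ofFn]
  have h2 : p.2 = v ⟨i + 1, by omega⟩ := by
    rw [← hip]
    rw [List.getElem_zip]
    simp only [List.getElem_tail, List.getElem_ofFn]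
  have := h ⟨i, by omega⟩
  rw [show (⟨i, by omega⟩ : Fin (N+1)).castSucc = ⟨i, by omega⟩ from rfl] at this
  rw [show (⟨i, by omega⟩ : Fin (N+1)).succ = ⟨i+1, by omega⟩ from rfl] at this
  simp only [h1, h2]
  exact decide_eq_true (by exact this)

private lemma sign_last : ∀ (l : List ℝ) (a : ℝ), a ≠ 0 → (∀ x ∈ l, x ≠ 0) →
    0 < a * (-1 : ℝ) ^ (signChanges (a :: l)) * (a :: l).getLast (List.cons_ne_nil a l)
  | [], a, ha, _ => by
    simp [signChanges_single]
    positivity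
  | b :: l', a, ha, h => by
    have hb : b ≠ 0 := h b ((List.mem_cons_self (a := b) (l := l')))
    have IH := sign_last l' b hb (fun x hx => h x (List.mem_cons_of_mem b hx))
    have hlast : (a :: b :: l').getLast (List.cons_ne_nil _ _)
        = (b :: l').getLast (List.cons_ne_nil _ _) := by
      rw [List.getLast_cons (List.cons_ne_nil b l')]
    rw [hlast, signChanges_cons_cons]
    set L := (b :: l').getLast (List.cons_ne_nil b l') with hL
    set e := (-1 : ℝ) ^ (signChanges (b :: l')) with he
    by_cases hab : a * b < 0
    · rw [if_pos hab, pow_succ]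
      have hbsq : 0 < b * b := mul_self_pos.2 hb
      nlinarith [mul_pos IH (neg_pos.2 hab)]
    · rw [if_neg hab, add_zero]
      have hab' : 0 < a * b := by
        rcases (mul_ne_zero ha hb).lt_or_gt with h' | h'
        · exact absurd h' hab
        · exact h'
      have hbsq : 0 < b * b := mul_self_pos.2 hb
      nlinarith [mul_pos IH hab']

private lemma exists_alt_sublist : ∀ (l : List ℝ) (a : ℝ), a ≠ 0 → (∀ x ∈ l, x ≠ 0) →
    ∃ t : List ℝ, (a :: t).Sublist (a :: l) ∧ (a :: t).Chain' (fun p q => p * q < 0) ∧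
      t.length = signChanges (a :: l)
  | [], a, _, _ => ⟨[], by simp, List.isChain_singleton _, by simp [signChanges_single]⟩
  | b :: l', a, ha, h => by
    have hb : b ≠ 0 := h b ((List.mem_cons_self (a := b) (l := l')))
    obtain ⟨t, hsub, hch, hlen⟩ :=
      exists_alt_sublist l' b hb (fun x hx => h x (List.mem_cons_of_mem b hx))
    rw [signChanges_cons_cons]
    by_cases hab : a * b < 0
    · refine ⟨b :: t, ?_, ?_, ?_⟩
      · exact List.Sublist.cons₂ a hsub
      · exact List.isChain_cons_cons.2 ⟨hab, hch⟩
      · simp [hlen, if_pos hab]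
    · refine ⟨t, ?_, ?_, ?_⟩
      · have ht : t.Sublist l' := (List.cons_sublist_cons).1 hsub
        exact List.Sublist.cons₂ a (ht.trans (List.sublist_cons_self b l'))
      · cases t with
        | nil => exact List.isChain_singleton _
        | cons c t' =>
          have hbc : b * c < 0 := (List.isChain_cons_cons.1 hch).1
          have hchc : (c :: t').Chain' (fun p q => p * q < 0) := (List.isChain_cons_cons.1 hch).2
          refine List.isChain_cons_cons.2 ⟨?_, hchc⟩
          have hab' : 0 < a * b := by
            rcases (mul_ne_zero ha hb).lt_or_gt with h' | h'
            · exact absurd h' hab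
            · exact h'
          nlinarith [mul_self_pos.2 hb]
      · simp [hlen, if_neg hab]

private lemma exists_strictMono_alt {N c : ℕ} (v : Fin N → ℝ) (hc : c + 1 ≤ Sm v) :
    ∃ i : Fin (c + 2) → Fin N, StrictMono i ∧
      ∀ j : Fin (c + 1), v (i j.castSucc) * v (i j.succ) < 0 := by
  set F := (List.ofFn v).filter (fun x => decide (x ≠ 0)) with hF
  have hFnz : ∀ x ∈ F, x ≠ 0 := fun x hx => by simpa using List.of_mem_filter hx
  have hFne : F ≠ [] := by
    intro h; rw [Sm, ← hF, h, signChanges_nil] at hc; omega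
  obtain ⟨a, F', haF⟩ := List.exists_cons_of_ne_nil hFne
  have ha : a ≠ 0 := hFnz a (haF ▸ (List.mem_cons_self (a := a) (l := F')))
  obtain ⟨t, hsub, hch, hlen⟩ := exists_alt_sublist F' a ha
    (fun x hx => hFnz x (haF ▸ List.mem_cons_of_mem a hx))
  have hlen2 : c + 2 ≤ (a :: t).length := by
    have : signChanges F = Sm v := by rw [Sm, ← hF]
    rw [← haF] at hlen
    simp only [List.length_cons]
    omega
  set s := (a :: t).take (c + 2) with hs
  have hslen : s.length = c + 2 := by
    rw [hs, List.length_take]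
    omega
  have hsch : s.Chain' (fun p q => p * q < 0) := hch.take _
  have hssub : s.Sublist (List.ofFn v) := by
    refine ((List.take_sublist _ _).trans hsub).trans ?_
    rw [← haF]
    exact List.filter_sublist
  obtain ⟨f, hf⟩ := List.sublist_iff_exists_fin_orderEmbedding_get_eq.1 hssub
  have hNlen : (List.ofFn v).length = N := List.length_ofFn
  refine ⟨fun j => Fin.cast hNlen (f (Fin.cast hslen.symm j)), ?_, ?_⟩
  · intro j1 j2 h12
    exact f.strictMono h12
  · intro j
    have hget : ∀ (j : Fin (c+2)), v (Fin.cast hNlen (f (Fin.cast hslen.symm j)))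
        = s.get (Fin.cast hslen.symm j) := by
      intro j
      rw [hf (Fin.cast hslen.symm j), List.get_ofFn]
    rw [hget, hget]
    have hchg := List.isChain_iff_getElem.1 hsch (j : ℕ) (by rw [hslen]; omega)
    have e1 : (Fin.cast hslen.symm j.castSucc) = ⟨(j:ℕ), by rw [hslen]; omega⟩ := rfl
    have e2 : (Fin.cast hslen.symm j.succ) = ⟨(j:ℕ)+1, by rw [hslen]; omega⟩ := rfl
    rw [e1, e2]
    exact hchg


private lemma filter_take_prefix_signChanges (p q : List ℝ) :
    signChanges (p.filter (fun a => decide (a ≠ 0))) ≤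
      signChanges ((p ++ q).filter (fun a => decide (a ≠ 0))) := by
  rw [List.filter_append]
  exact signChanges_le_append _ _

private lemma grouping {n : ℕ} (x : Fin n → ℝ) (hx0 : x ≠ 0) :
    ∃ s0 : ℝ, s0 ≠ 0 ∧ ∃ t : Fin n → ℕ,
      (∀ l, t l ≤ Sm x) ∧ (Monotone t) ∧
      (∀ l, x l ≠ 0 → 0 < s0 * (-1:ℝ)^(t l) * x l) := by
  classical
  set pred : ℝ → Bool := fun a => decide (a ≠ 0) with hpred
  set F : List ℝ := (List.ofFn x).filter pred with hF
  have hFne : F ≠ [] := by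
    obtain ⟨l0, hl0⟩ : ∃ l0, x l0 ≠ 0 := by
      by_contra hcon
      push_neg at hcon
      exact hx0 (funext fun l => hcon l)
    intro h
    have : x l0 ∈ F := by
      rw [hF, List.mem_filter]
      exact ⟨List.mem_ofFn.2 ⟨l0, rfl⟩, by simp [hpred, hl0]⟩
    rw [h] at this
    exact List.not_mem_nil this
  obtain ⟨s0, F', hF'⟩ := List.exists_cons_of_ne_nil hFne
  have hs0 : s0 ≠ 0 := by
    have : s0 ∈ F := hF' ▸ (List.mem_cons_self (a := s0) (l := F'))
    have := List.of_mem_filter this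
    simpa [hpred] using this
  have hheadI : F.headI = s0 := by rw [hF']; rfl
  refine ⟨s0, hs0, fun l => signChanges (((List.ofFn x).take ((l:ℕ)+1)).filter pred), ?_, ?_, ?_⟩
  · intro l
    have : Sm x = signChanges F := by rw [Sm, hF, hpred]
    rw [this]
    have hsplit : (List.ofFn x).take ((l:ℕ)+1) ++ (List.ofFn x).drop ((l:ℕ)+1) = List.ofFn x :=
      List.take_append_drop _ _
    calc signChanges (((List.ofFn x).take ((l:ℕ)+1)).filter pred)
        ≤ signChanges ((((List.ofFn x).take ((l:ℕ)+1)) ++ ((List.ofFn x).drop ((l:ℕ)+1))).filter pred) :=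
          filter_take_prefix_signChanges _ _
      _ = signChanges F := by rw [hsplit, hF]
  · intro l l' hll'
    have h1 : (List.ofFn x).take ((l:ℕ)+1) = ((List.ofFn x).take ((l':ℕ)+1)).take ((l:ℕ)+1) := by
      rw [List.take_take]
      congr 1
      omega
    have hsplit : (((List.ofFn x).take ((l':ℕ)+1)).take ((l:ℕ)+1)) ++
        (((List.ofFn x).take ((l':ℕ)+1)).drop ((l:ℕ)+1)) = (List.ofFn x).take ((l':ℕ)+1) :=
      List.take_append_drop _ _
    calc signChanges (((List.ofFn x).take ((l:ℕ)+1)).filter pred)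
        = signChanges ((((List.ofFn x).take ((l':ℕ)+1)).take ((l:ℕ)+1)).filter pred) := by rw [← h1]
      _ ≤ signChanges ((((List.ofFn x).take ((l':ℕ)+1)).take ((l:ℕ)+1) ++
          (((List.ofFn x).take ((l':ℕ)+1)).drop ((l:ℕ)+1))).filter pred) :=
          filter_take_prefix_signChanges _ _
      _ = signChanges (((List.ofFn x).take ((l':ℕ)+1)).filter pred) := by rw [hsplit]
  · intro l hl
    set p : List ℝ := (List.ofFn x).take ((l:ℕ)+1) with hp
    set G : List ℝ := p.filter pred with hG
    have hpl : p = (List.ofFn x).take (l:ℕ) ++ [x l] := by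
      rw [hp, List.take_succ]
      congr 1
      have : (List.ofFn x)[(l:ℕ)]? = some (x l) := by
        rw [List.getElem?_eq_getElem (by simp [l.isLt])]
        simp [List.getElem_ofFn]
      rw [this]
      rfl
    have hGsplit : G = ((List.ofFn x).take (l:ℕ)).filter pred ++ [x l] := by
      rw [hG, hpl, List.filter_append]
      congr 1
      simp [hpred, hl]
    have hGne : G ≠ [] := by
      rw [hGsplit]
      simp
    obtain ⟨a, G', haG⟩ := List.exists_cons_of_ne_nil hGne
    have hGnz : ∀ z ∈ G, z ≠ 0 := by
      intro z hz
      have := List.of_mem_filter (hG ▸ hz)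
      simpa [hpred] using this
    have ha : a ≠ 0 := hGnz a (haG ▸ (List.mem_cons_self (a := a) (l := G')))
    have hlastq : (a :: G').getLast (List.cons_ne_nil a G') = x l := by
      have h2 : (a :: G').getLast? = some (x l) := by
        rw [← haG, hGsplit]
        simp
      rw [List.getLast?_eq_getLast (List.cons_ne_nil a G')] at h2
      exact Option.some_inj.1 h2
    -- head of G equals s0
    have hhead : a = s0 := by
      have hsplit2 : G ++ ((List.ofFn x).drop ((l:ℕ)+1)).filter pred = F := by
        rw [hG, hF, hp, ← List.filter_append, List.take_append_drop]
      rw [← hsplit2, haG] at hF'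
      rw [List.cons_append] at hF'
      exact (List.cons.injEq _ _ _ _ ▸ hF').1
    have hsign := sign_last G' a ha (fun z hz => hGnz z (haG ▸ List.mem_cons_of_mem a hz))
    rw [hlastq, hhead] at hsign
    show 0 < s0 * (-1:ℝ)^(signChanges G) * x l
    rw [haG, hhead]
    exact hsign

private lemma sr_mul_E {m n k : ℕ} (A : Matrix (Fin m) (Fin n) ℝ) (ε : ℕ → ℝ)
    (hA : srPattern A ε) (t : Fin n → Fin (k + 1)) (ht : Monotone t)
    (y : Fin n → ℝ) (hy : ∀ l, 0 ≤ y l) :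
    srPattern (A * (Matrix.of fun l c => if c = t l then y l else 0)) ε := by
  set E : Matrix (Fin n) (Fin (k+1)) ℝ := Matrix.of fun l c => if c = t l then y l else 0 with hE
  intro r hr1 hr2 f g hf hg
  have hdet : ((A * E).submatrix f g).det =
      ∑ p : Fin r → Fin n, (∏ j, E (p j) (g j)) * (A.submatrix f p).det := by
    rw [← Matrix.det_transpose]
    have hrows : ((A * E).submatrix f g)ᵀ =
        Matrix.of (fun j : Fin r => ∑ l : Fin n, E l (g j) • (fun i : Fin r => A (f i) l)) := by
      ext j i
      simp [Matrix.mul_apply, mul_comm]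
    rw [hrows]
    rw [show (Matrix.of (fun j : Fin r => ∑ l : Fin n, E l (g j) • (fun i : Fin r => A (f i) l))).det
      = (Matrix.detRowAlternating (R := ℝ) (n := Fin r)).toMultilinearMap
        (fun j : Fin r => ∑ l : Fin n, E l (g j) • (fun i : Fin r => A (f i) l)) from rfl]
    rw [MultilinearMap.map_sum]
    refine Finset.sum_congr rfl fun p _ => ?_
    rw [MultilinearMap.map_smul_univ]
    have : (Matrix.detRowAlternating (R := ℝ) (n := Fin r)).toMultilinearMap
        (fun j : Fin r => (fun i : Fin r => A (f i) (p j))) = ((A.submatrix f p)ᵀ).det := rfl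
    rw [this, Matrix.det_transpose]
    simp
  rw [hdet, Finset.mul_sum]
  refine Finset.sum_nonneg fun p _ => ?_
  by_cases hp : ∃ j, E (p j) (g j) = 0
  · obtain ⟨j, hj⟩ := hp
    rw [Finset.prod_eq_zero (Finset.mem_univ j) hj]
    simp
  · push_neg at hp
    have htp : ∀ j, t (p j) = g j := by
      intro j
      have := hp j
      rw [hE] at this
      simp only [Matrix.of_apply] at this
      by_contra hne
      exact this (if_neg (fun h => hne h.symm))
    have hpmono : StrictMono p := by
      intro j1 j2 h12
      have hg12 : g j1 < g j2 := hg h12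
      rcases lt_trichotomy (p j1) (p j2) with h | h | h
      · exact h
      · rw [← htp j1, ← htp j2, h] at hg12; exact absurd hg12 (lt_irrefl _)
      · have := ht h.le
        rw [htp j1, htp j2] at this
        exact absurd this (not_le.2 hg12)
    have hrn : r ≤ n := by
      haveI := Fintype.card_fin n
      calc r = Fintype.card (Fin r) := (Fintype.card_fin r).symm
      _ ≤ Fintype.card (Fin n) := Fintype.card_le_of_injective p hpmono.injective
      _ = n := Fintype.card_fin n
    have hterm := hA r hr1 (le_min (le_trans hr2 (min_le_left _ _)) hrn) f p hf hpmono
    rw [mul_comm (∏ j, E (p j) (g j)) _, ← mul_assoc]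
    exact mul_nonneg hterm (Finset.prod_nonneg fun j _ => by
      rw [hE]; simp only [Matrix.of_apply]; split
      · exact hy _
      · exact le_refl 0)

private lemma alt_signs {N : ℕ} (u : Fin (N + 2) → ℝ)
    (h : ∀ j : Fin (N + 1), u j.castSucc * u j.succ < 0) :
    ∃ s : ℝ, (s = 1 ∨ s = -1) ∧ ∀ j : Fin (N + 2), 0 < s * (-1 : ℝ) ^ (j : ℕ) * u j := by
  have h0 : u 0 ≠ 0 := by
    intro h0
    have := h 0
    rw [show (0 : Fin (N+1)).castSucc = 0 from rfl, h0] at this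
    simp at this
  refine ⟨if 0 < u 0 then 1 else -1, by split <;> simp, ?_⟩
  have key : ∀ jv : ℕ, ∀ hjv : jv < N + 2,
      0 < (if 0 < u 0 then (1:ℝ) else -1) * (-1 : ℝ) ^ jv * u ⟨jv, hjv⟩ := by
    intro jv
    induction jv with
    | zero =>
      intro hjv
      rcases h0.lt_or_gt with hlt | hlt
      · rw [if_neg (not_lt.2 hlt.le)]
        simpa using hlt
      · rw [if_pos hlt]
        simpa using hlt
    | succ j ih =>
      intro hjv
      have hj2 : j < N + 2 := by omega
      have hprev := ih hj2
      have hpair := h ⟨j, by omega⟩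
      have e1 : (⟨j, by omega⟩ : Fin (N+1)).castSucc = ⟨j, hj2⟩ := rfl
      have e2 : (⟨j, by omega⟩ : Fin (N+1)).succ = ⟨j+1, hjv⟩ := rfl
      rw [e1, e2] at hpair
      rw [pow_succ]
      set s := if 0 < u 0 then (1:ℝ) else -1 with hs
      have hs2 : (s * (-1 : ℝ) ^ j) * (s * (-1 : ℝ) ^ j) = 1 := by
        have he : (-1 : ℝ) ^ j * (-1) ^ j = 1 := by
          rw [← pow_add, ← two_mul, pow_mul]; norm_num
        have hss : s * s = 1 := by rw [hs]; split <;> norm_num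
        calc (s * (-1 : ℝ) ^ j) * (s * (-1 : ℝ) ^ j) = (s * s) * ((-1:ℝ)^j * (-1)^j) := by ring
        _ = 1 := by rw [hss, he, mul_one]
      rw [show s * ((-1:ℝ)^j * -1) * u ⟨j+1, hjv⟩
        = -((s * (-1:ℝ)^j) * u ⟨j+1,hjv⟩) from by ring]
      rcases mul_self_eq_one_iff.1 hs2 with hP | hP
      · rw [hP]
        rw [hP] at hprev
        nlinarith [hprev, hpair]
      · rw [hP]
        rw [hP] at hprev
        nlinarith [hprev, hpair]
  intro j
  have := key j.1 j.2
  simpa using this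

private lemma maximal_minors_vanish {k : ℕ} (B : Matrix (Fin (k+2)) (Fin (k+1)) ℝ) (ε : ℕ → ℝ)
    (hsv : ∀ r, ε r = 1 ∨ ε r = -1) (hB : srPattern B ε) (w : Fin (k+1) → ℝ)
    (halt : ∀ j : Fin (k+1), (B *ᵥ w) j.castSucc * (B *ᵥ w) j.succ < 0) :
    ∀ i : Fin (k+2), (B.submatrix i.succAbove id).det = 0 := by
  set u := B *ᵥ w with hu
  set D : Matrix (Fin (k+2)) (Fin (k+2)) ℝ :=
    Matrix.of (fun i j => Fin.lastCases (u i) (fun j' => B i j') j) with hD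
  have hDlast : ∀ i, D i (Fin.last (k+1)) = u i := by
    intro i; simp [hD]
  have hDcast : ∀ i (j' : Fin (k+1)), D i (Fin.castSucc j') = B i j' := by
    intro i j'; simp [hD]
  have hD0 : D.det = 0 := by
    have hcoef := Matrix.det_updateCol_sum D (Fin.last (k+1))
      (Fin.lastCases 0 w : Fin (k+2) → ℝ)
    have heq : D.updateCol (Fin.last (k+1))
        (fun i => ∑ c, (Fin.lastCases 0 w : Fin (k+2) → ℝ) c • D i c) = D := by
      have hcol : (fun i => ∑ c, (Fin.lastCases 0 w : Fin (k+2) → ℝ) c • D i c)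
          = fun i => D i (Fin.last (k+1)) := by
        funext i
        rw [Fin.sum_univ_castSucc]
        simp only [Fin.lastCases_castSucc, Fin.lastCases_last, zero_smul, add_zero]
        rw [hDlast, hu]
        simp only [Matrix.mulVec, dotProduct, smul_eq_mul]
        refine Finset.sum_congr rfl fun c _ => ?_
        rw [hDcast]
        ring
      rw [hcol, Matrix.updateCol_eq_self]
    rw [heq] at hcoef
    simpa using hcoef
  have hlap := Matrix.det_succ_column D (Fin.last (k+1))
  rw [hD0] at hlap
  have hsubm : ∀ i : Fin (k+2), D.submatrix i.succAbove (Fin.last (k+1)).succAbove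
      = B.submatrix i.succAbove id := by
    intro i
    ext i' j'
    rw [Fin.succAbove_last]
    simp only [Matrix.submatrix_apply, id_eq]
    exact hDcast _ j'
  obtain ⟨s, hs1, hspos⟩ := alt_signs u halt
  have hε := hsv (k + 1)
  have hεne : ε (k + 1) ≠ 0 := by rcases hε with h | h <;> rw [h] <;> norm_num
  have hk2 : ((-1:ℝ)^(k+1)) * ((-1:ℝ)^(k+1)) = 1 := by
    rw [← pow_add, ← two_mul, pow_mul]; norm_num
  have hg0 : ∀ i : Fin (k+2),
      (0:ℝ) ≤ (s * (-1:ℝ)^(i:ℕ) * u i) * (ε (k+1) * (B.submatrix i.succAbove id).det) := by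
    intro i
    refine mul_nonneg (hspos i).le ?_
    exact hB (k+1) (by omega) (by simp) i.succAbove id (Fin.strictMono_succAbove i)
      strictMono_id
  have hsum : ∑ i : Fin (k+2),
      (s * (-1:ℝ)^(i:ℕ) * u i) * (ε (k+1) * (B.submatrix i.succAbove id).det) = 0 := by
    have hexp : ∀ i : Fin (k+2),
        (s * (-1:ℝ)^(i:ℕ) * u i) * (ε (k+1) * (B.submatrix i.succAbove id).det)
        = (s * ε (k+1) * (-1:ℝ)^(k+1)) *
          ((-1:ℝ)^((i:ℕ) + ((Fin.last (k+1)):ℕ)) * D i (Fin.last (k+1)) *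
            (D.submatrix i.succAbove (Fin.last (k+1)).succAbove).det) := by
      intro i
      rw [hsubm i, hDlast, Fin.val_last, pow_add (-1:ℝ) (i:ℕ) (k+1)]
      linear_combination
        (-(s * (-1:ℝ)^(i:ℕ) * u i * ε (k+1) * (B.submatrix i.succAbove id).det)) * hk2
    rw [Finset.sum_congr rfl (fun i _ => hexp i), ← Finset.mul_sum, ← hlap, mul_zero]
  have hall := (Finset.sum_eq_zero_iff_of_nonneg (fun i _ => hg0 i)).1 hsum
  intro i
  have hi := hall i (Finset.mem_univ i)
  rcases mul_eq_zero.1 hi with h | h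
  · exact absurd h (ne_of_gt (hspos i))
  · rcases mul_eq_zero.1 h with h' | h'
    · exact absurd h' hεne
    · exact h'

private lemma exists_kernel_vec {k : ℕ} (B : Matrix (Fin (k+2)) (Fin (k+1)) ℝ)
    (hM : ∀ i : Fin (k+2), (B.submatrix i.succAbove id).det = 0) :
    ∃ c : Fin (k+1) → ℝ, c ≠ 0 ∧ B *ᵥ c = 0 := by
  have hc : ∀ i : Fin (k+2), ∃ c : Fin (k+1) → ℝ, c ≠ 0 ∧
      ∀ i' : Fin (k+2), i' ≠ i → (B *ᵥ c) i' = 0 := by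
    intro i
    obtain ⟨c, hc0, hcv⟩ := Matrix.exists_mulVec_eq_zero_iff.2 (hM i)
    refine ⟨c, hc0, fun i' hi' => ?_⟩
    obtain ⟨j', hj'⟩ := Fin.exists_succAbove_eq hi'
    have : ((B.submatrix i.succAbove id) *ᵥ c) j' = 0 := by rw [hcv]; rfl
    rw [← hj']
    simpa [Matrix.mulVec, Matrix.submatrix_apply, dotProduct] using this
  by_contra hcon
  push_neg at hcon
  have hmem : ∀ i : Fin (k+2), (Pi.single i 1 : Fin (k+2) → ℝ) ∈
      LinearMap.range (Matrix.mulVecLin B) := by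
    intro i
    obtain ⟨c, hc0, hcz⟩ := hc i
    have hBc0 : (B *ᵥ c) i ≠ 0 := by
      intro h0
      refine hcon c hc0 (funext fun i' => ?_)
      by_cases hi' : i' = i
      · rw [hi', h0]; rfl
      · rw [hcz i' hi']; rfl
    have hBc : B *ᵥ c = ((B *ᵥ c) i) • (Pi.single i 1 : Fin (k+2) → ℝ) := by
      funext i'
      by_cases hi' : i' = i
      · subst hi'; simp
      · rw [hcz i' hi']
        simp [Pi.single_apply, hi']
    refine ⟨((B *ᵥ c) i)⁻¹ • c, ?_⟩
    rw [Matrix.mulVecLin_apply, Matrix.mulVec_smul]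
    nth_rewrite 2 [hBc]
    rw [smul_smul, inv_mul_cancel₀ hBc0, one_smul]
  have hrange : LinearMap.range (Matrix.mulVecLin B) = ⊤ := by
    rw [eq_top_iff, ← (Pi.basisFun ℝ (Fin (k+2))).span_eq, Submodule.span_le]
    rintro v ⟨i, rfl⟩
    simpa [Pi.basisFun_apply] using hmem i
  have h1 : Module.finrank ℝ (LinearMap.range (Matrix.mulVecLin B)) ≤ k + 1 := by
    have := LinearMap.finrank_range_le (Matrix.mulVecLin B)
    simpa [Module.finrank_pi] using this
  rw [hrange] at h1
  have h2 : Module.finrank ℝ (⊤ : Submodule ℝ (Fin (k+2) → ℝ)) = k + 2 := by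
    rw [finrank_top, Module.finrank_pi]
    simp
  omega

private lemma key : ∀ (k m n : ℕ) (A : Matrix (Fin m) (Fin n) ℝ) (ε : ℕ → ℝ),
    (∀ r, ε r = 1 ∨ ε r = -1) → srPattern A ε →
    ∀ x : Fin n → ℝ, Sm x = k → Sm (A *ᵥ x) ≤ k := by
  intro k
  induction k using Nat.strong_induction_on with
  | _ k IH =>
  intro m n A ε hsv hA x hx
  by_cases hx0 : x = 0
  · subst hx0
    rw [Matrix.mulVec_zero, Sm_zero]
    omega
  obtain ⟨s0, hs0, t, ht_le, ht_mono, ht_sign⟩ := grouping x hx0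
  rw [hx] at ht_le
  set tF : Fin n → Fin (k+1) := fun l => ⟨t l, by have := ht_le l; omega⟩ with htF
  have htFmono : Monotone tF := fun l l' h => by
    simp only [htF, Fin.mk_le_mk]
    exact ht_mono h
  set y : Fin n → ℝ := fun l => x l * (-1:ℝ)^(t l) / s0 with hy_def
  have hy : ∀ l, 0 ≤ y l := by
    intro l
    by_cases hxl : x l = 0
    · simp [hy_def, hxl]
    · have h3 := ht_sign l hxl
      have hyeq : y l = (s0 * (-1:ℝ)^(t l) * x l) / (s0 * s0) := by
        rw [hy_def]
        rw [div_eq_div_iff hs0 (mul_ne_zero hs0 hs0)]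
        ring
      rw [hyeq]
      exact (div_pos h3 (mul_self_pos.2 hs0)).le
  set E : Matrix (Fin n) (Fin (k+1)) ℝ := Matrix.of fun l c => if c = tF l then y l else 0
    with hE
  set C : Matrix (Fin m) (Fin (k+1)) ℝ := A * E with hCdef
  have hC : srPattern C ε := sr_mul_E A ε hA tF htFmono y hy
  set w : Fin (k+1) → ℝ := fun c => s0 * (-1:ℝ)^(c:ℕ) with hw
  have hEw : E *ᵥ w = x := by
    funext l
    have hpow : (-1:ℝ)^(t l) * (-1:ℝ)^(t l) = 1 := by
      rw [← pow_add, ← two_mul, pow_mul]; norm_num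
    have h1 : (E *ᵥ w) l = ∑ c : Fin (k+1), (if c = tF l then y l else 0) * w c := by
      simp [Matrix.mulVec, dotProduct, hE]
    rw [h1]
    have h2 : ∀ c : Fin (k+1), (if c = tF l then y l else 0) * w c
        = if c = tF l then y l * w c else 0 := by
      intro c; split <;> simp
    rw [Finset.sum_congr rfl (fun c _ => h2 c), Finset.sum_ite_eq' Finset.univ (tF l)
      (fun c => y l * w c)]
    rw [if_pos (Finset.mem_univ _)]
    have htFl : ((tF l : Fin (k+1)) : ℕ) = t l := rfl
    rw [hw, hy_def]
    simp only [htFl]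
    field_simp
    linear_combination (x l) * hpow
  have hCw : A *ᵥ x = C *ᵥ w := by
    rw [← hEw, hCdef, Matrix.mulVec_mulVec]
  by_contra hcon
  push_neg at hcon
  rw [hCw] at hcon
  obtain ⟨i, himono, hialt⟩ := exists_strictMono_alt (c := k) (C *ᵥ w) hcon
  have hm : k + 2 ≤ m := by
    have := Fintype.card_le_of_injective i himono.injective
    simpa using this
  set B : Matrix (Fin (k+2)) (Fin (k+1)) ℝ := C.submatrix i id with hBdef
  have hB : srPattern B ε := by
    intro r h1 h2 f g hf hg
    have hr2 : r ≤ min m (k+1) := by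
      have h2' : r ≤ min (k+2) (k+1) := h2
      have := min_le_left (k+2) (k+1)
      have := min_le_right (k+2) (k+1)
      refine le_min (by omega) (by omega)
    have := hC r h1 hr2 (i ∘ f) g (himono.comp hf) hg
    rw [hBdef, Matrix.submatrix_submatrix]
    simpa using this
  have hBw : B *ᵥ w = fun j => (C *ᵥ w) (i j) := by
    funext j
    simp [hBdef, Matrix.mulVec, dotProduct, Matrix.submatrix_apply]
  have halt' : ∀ j : Fin (k+1), (B *ᵥ w) j.castSucc * (B *ᵥ w) j.succ < 0 := by
    intro j
    rw [hBw]
    exact hialt j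
  have hMz := maximal_minors_vanish B ε hsv hB w halt'
  obtain ⟨c, hc0, hBc⟩ := exists_kernel_vec B hMz
  obtain ⟨j₁, hj₁⟩ := Function.ne_iff.1 hc0
  simp only [Pi.zero_apply] at hj₁
  set x' : Fin (k+1) → ℝ := w - (w j₁ / c j₁) • c with hx'
  have hx'j : x' j₁ = 0 := by
    simp only [hx', Pi.sub_apply, Pi.smul_apply, smul_eq_mul]
    field_simp
    ring
  have hBx' : B *ᵥ x' = B *ᵥ w := by
    rw [hx', Matrix.mulVec_sub, Matrix.mulVec_smul, hBc, smul_zero, sub_zero]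
  rcases Nat.eq_zero_or_pos k with hk | hk
  · subst hk
    have hx'0 : x' = 0 := by
      funext l
      rw [show l = j₁ from Fin.ext (by omega), hx'j]
      rfl
    have := halt' 0
    rw [← hBx', hx'0, Matrix.mulVec_zero] at this
    simp at this
  · have hx'Sm : Sm x' < k := by
      rcases Nat.exists_eq_add_of_lt hk with ⟨k', rfl⟩
      exact Sm_lt_of_eq_zero x' j₁ hx'j (by omega)
    have hIH := IH (Sm x') (by omega) (k+2) (k+1) B ε hsv hB x' rfl
    rw [hBx'] at hIH
    have hlow : k + 1 ≤ Sm (B *ᵥ w) := le_signChanges_of_alt (N := k) (B *ᵥ w) halt'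
    omega

end SchoenbergAux

theorem stmt11 {m n : ℕ} (A : Matrix (Fin m) (Fin n) ℝ) (ε : ℕ → ℝ)
    (hsv : ∀ r, ε r = 1 ∨ ε r = -1) (hA : srPattern A ε) :
    ∀ x : Fin n → ℝ, Sm (A *ᵥ x) ≤ Sm x := by
  intro x
  exact key (Sm x) m n A ε hsv hA x rfl
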